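/- Let V be a finite set, l ≥ 1 an integer, and for each i ∈ {1,…,l} let V_{i1}, V_{i2} ⊆ V; let f ∈ {0,1}^l. Consider the multifamily 𝒟_f of subsets of V consisting of, for each i with f_i = 0, the single set V_{i1} ∩ V_{i2}, and for each i with f_i = 1, the two sets V_{i1} and V_{i2}. Then 𝒟_f admits a system of distinct representatives (an injective choice of one element from each member of the multifamily) if and only if in the complete graph on V there exist pairwise vertex-disjoint paths P_1,…,P_l such that for each i: if f_i = 0 then P_i consists of a single vertex belonging to V_{i1} ∩ V_{i2}, and if f_i = 1 then P_i contains at least one edge and one endpoint of P_i belongs to V_{i1} while the other endpoint belongs to V_{i2}. -/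

import Mathlib

open SimpleGraph

/-- The multifamily `𝒟_f` of subsets of `V`, indexed by pairs `(i, j)`: when `f i = true`
its two members for index `i` are `V1 i` (at `j = 0`) and `V2 i` (at `j = 1`); when
`f i = false` its single member for index `i` is `V1 i ∩ V2 i` (at `j = 0`, with index
`(i, 1)` excluded from the index set of the multifamily). -/
def Dfam {V : Type*} {l : ℕ} (V1 V2 : Fin l → Set V) (f : Fin l → Bool) :
    Fin l × Fin 2 → Set V :=
  fun p => if f p.1 then (if p.2 = 0 then V1 p.1 else V2 p.1) else V1 p.1 ∩ V2 p.1

/-- the multifamily `𝒟_f` admits a system of distinct representatives iff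
there exist pairwise vertex-disjoint paths `P₁, …, P_l` in the complete graph on `V` such
that for each `i`: if `f i = 0` then `P i` is a single vertex lying in `V1 i ∩ V2 i`, and
if `f i = 1` then `P i` has at least one edge, with one endpoint in `V1 i` and the other
in `V2 i`. -/
theorem stmt_18 {V : Type*} [Fintype V] (l : ℕ) (hl : 1 ≤ l)
    (V1 V2 : Fin l → Set V) (f : Fin l → Bool) :
    (∃ g : {p : Fin l × Fin 2 // f p.1 = true ∨ p.2 = 0} → V,
        Function.Injective g ∧ ∀ p, g p ∈ Dfam V1 V2 f p.1) ↔
      (∃ (a b : Fin l → V) (P : ∀ i, (⊤ : SimpleGraph V).Walk (a i) (b i)),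
        (∀ i, (P i).IsPath) ∧
        (∀ i j, i ≠ j → ∀ x, x ∈ (P i).support → x ∉ (P j).support) ∧
        (∀ i, if f i then
            1 ≤ (P i).length ∧
              ((a i ∈ V1 i ∧ b i ∈ V2 i) ∨ (a i ∈ V2 i ∧ b i ∈ V1 i))
          else (P i).length = 0 ∧ a i ∈ V1 i ∩ V2 i)) := by
    classical
  constructor
  · rintro ⟨g, hg, hgmem⟩
    set a : Fin l → V := fun i => g ⟨(i, 0), Or.inr rfl⟩ with ha
    set b : Fin l → V := fun i => if h : f i = true then g ⟨(i, 1), Or.inl h⟩ else a i with hb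
    have key : ∀ (i : Fin l) (x : V), (x = a i ∨ x = b i) →
        ∃ p : {p : Fin l × Fin 2 // f p.1 = true ∨ p.2 = 0}, p.1.1 = i ∧ g p = x := by
      intro i x hx
      rcases hx with rfl | rfl
      · exact ⟨⟨(i, 0), Or.inr rfl⟩, rfl, rfl⟩
      · by_cases hf : f i = true
        · exact ⟨⟨(i, 1), Or.inl hf⟩, rfl, by simp [hb, hf]⟩
        · exact ⟨⟨(i, 0), Or.inr rfl⟩, rfl, by simp [hb, hf]; rfl⟩
    have H : ∀ i, ∃ p : (⊤ : SimpleGraph V).Walk (a i) (b i), p.IsPath ∧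
        (∀ x ∈ p.support, x = a i ∨ x = b i) ∧
        (if f i then p.length = 1 else p.length = 0) := by
      intro i
      by_cases hf : f i = true
      · have hne : a i ≠ b i := by
          rw [ha, hb]; dsimp only; rw [dif_pos hf]
          intro h
          simpa using congrArg (fun r => r.1.2) (hg h)
        refine ⟨Walk.cons (by simpa using hne) Walk.nil, ?_, ?_, ?_⟩
        · simp [Walk.isPath_def, hne]
        · intro x hx; simpa using hx
        · simp [hf]
      · have hab : a i = b i := by simp [hb, hf]
        refine ⟨Walk.nil.copy rfl hab, ?_, ?_, ?_⟩
        · simp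
        · intro x hx
          rw [Walk.support_copy] at hx
          simp at hx; exact Or.inl hx
        · simp [hf]
    choose P hP1 hP2 hP3 using H
    refine ⟨a, b, P, hP1, ?_, ?_⟩
    · intro i j hij x hxi hxj
      obtain ⟨p, hp1, hp2⟩ := key i x (hP2 i x hxi)
      obtain ⟨q, hq1, hq2⟩ := key j x (hP2 j x hxj)
      have : p = q := hg (hp2.trans hq2.symm)
      exact hij (hp1 ▸ hq1 ▸ congrArg (fun r => r.1.1) this)
    · intro i
      by_cases hf : f i = true
      · have hmem0 := hgmem ⟨(i, 0), Or.inr rfl⟩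
        have hmem1 := hgmem ⟨(i, 1), Or.inl hf⟩
        simp [Dfam, hf] at hmem0 hmem1
        have h3 := hP3 i
        rw [if_pos hf] at h3
        rw [if_pos hf]
        exact ⟨by omega, Or.inl ⟨hmem0, by simpa [hb, hf] using hmem1⟩⟩
      · have hmem0 := hgmem ⟨(i, 0), Or.inr rfl⟩
        simp [Dfam, hf] at hmem0
        have h3 := hP3 i
        rw [if_neg hf] at h3
        rw [if_neg hf]
        exact ⟨h3, hmem0⟩
  · rintro ⟨a, b, P, h1, h2, h3⟩
    have hab : ∀ i, f i = true → a i ≠ b i := by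
      intro i hf h
      have hlen : 1 ≤ (P i).length := by have := h3 i; rw [if_pos hf] at this; exact this.1
      have hq : ((P i).copy rfl h.symm).IsPath := by rw [Walk.isPath_copy]; exact h1 i
      rw [Walk.isPath_iff_eq_nil] at hq
      have : (P i).length = 0 := by
        have := congrArg Walk.length hq
        simpa using this
      omega
    set g : {p : Fin l × Fin 2 // f p.1 = true ∨ p.2 = 0} → V := fun p =>
      if a p.1.1 ∈ V1 p.1.1 ∧ b p.1.1 ∈ V2 p.1.1 then
        (if p.1.2 = 0 then a p.1.1 else b p.1.1)
      else (if p.1.2 = 0 then b p.1.1 else a p.1.1) with hgdef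
    have vi : ∀ r, g r = a r.1.1 ∨ g r = b r.1.1 := by
      intro r; rw [hgdef]; dsimp only; split <;> split <;> simp
    have memsup : ∀ r, g r ∈ (P r.1.1).support := by
      intro r; rcases vi r with h | h <;> rw [h]
      · exact (P _).start_mem_support
      · exact (P _).end_mem_support
    refine ⟨g, ?_, ?_⟩
    · rintro ⟨⟨i, j⟩, hp⟩ ⟨⟨i', j'⟩, hq⟩ h
      have hii : i = i' := by
        by_contra hne
        exact h2 i i' hne _ (memsup ⟨(i, j), hp⟩) (h ▸ memsup ⟨(i', j'), hq⟩)
      subst hii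
      have hjj : j = j' := by
        by_contra hne
        have hf : f i = true := by
          rcases hp with h0 | h0
          · exact h0
          rcases hq with h1' | h1'
          · exact h1'
          · exact absurd (h0.trans h1'.symm) hne
        have hne' : a i ≠ b i := hab i hf
        have hval : ∀ (hp0 : f (i, (0 : Fin 2)).1 = true ∨ ((i, (0 : Fin 2)) : Fin l × Fin 2).2 = 0)
            (hp1 : f (i, (1 : Fin 2)).1 = true ∨ ((i, (1 : Fin 2)) : Fin l × Fin 2).2 = 0),
            g ⟨(i, 0), hp0⟩ ≠ g ⟨(i, 1), hp1⟩ := by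
          intro hp0 hp1
          rw [hgdef]; dsimp only
          by_cases hA : a i ∈ V1 i ∧ b i ∈ V2 i <;>
            simp [hA, (by decide : ¬(1 : Fin 2) = 0), hne', hne'.symm]
        have hj2 : j = 0 ∧ j' = 1 ∨ j = 1 ∧ j' = 0 := by
          rcases j with ⟨jv, hv⟩; rcases j' with ⟨jv', hv'⟩
          simp only [Fin.ext_iff, Fin.val_zero, Fin.val_one] at hne ⊢
          omega
        rcases hj2 with ⟨rfl, rfl⟩ | ⟨rfl, rfl⟩
        · exact hval hp hq h
        · exact hval hq hp h.symm
      subst hjj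
      rfl
    · rintro ⟨⟨i, j⟩, hp⟩
      by_cases hf : f i = true
      · rw [hgdef]; dsimp only
        have h3i := h3 i; rw [if_pos hf] at h3i
        simp only [Dfam, hf, if_true]
        by_cases hA : a i ∈ V1 i ∧ b i ∈ V2 i
        · rw [if_pos hA]; by_cases hj : j = 0 <;> simp [hj, hA.1, hA.2]
        · have hB : a i ∈ V2 i ∧ b i ∈ V1 i := h3i.2.resolve_left hA
          rw [if_neg hA]; by_cases hj : j = 0 <;> simp [hj, hB.1, hB.2]
      · have hj : j = 0 := hp.resolve_left hf
        have h3i := h3 i; rw [if_neg hf] at h3i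
        have hE : a i = b i := (P i).eq_of_length_eq_zero h3i.1
        have hgv : g ⟨(i, j), hp⟩ = a i := by
          rw [hgdef]; dsimp only; rw [← hE]; split <;> simp
        rw [hgv]
        simp only [Dfam]
        rw [if_neg (by simp [hf])]
        exact h3i.2
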